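/- The subspaces ⟨A⟩ (the span of A), 𝓔, T𝓔, T²𝓔, …, T^{m−1}𝓔 of End_F(U) are in direct sum. -/

import Mathlib

open Polynomial

/-- The shifted polynomial `p_{i+1}(X) = p₁(X + i)`: we use 0-based indexing for the
paper's `p_i(X) = p₁(X + (i−1))`, `1 ≤ i ≤ m`. -/
noncomputable def pShift {F : Type*} [Field F] (q : Polynomial F) (i : ℕ) : Polynomial F :=
  q.comp (X + C (i : F))

/-- The `F[X]`-module `U = U₁ ⊕ ⋯ ⊕ U_m`, where `U_{i+1} = F[X]·u_{i+1} ≅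
F[X]/(p_{i+1}^{s_{i+1}})` (0-based indexing). -/
def Uspace (F : Type*) [Field F] (q : Polynomial F) (m : ℕ) (s : Fin m → ℕ) : Type _ :=
  (i : Fin m) → Polynomial F ⧸ Ideal.span {(pShift q i) ^ (s i)}

noncomputable instance {F : Type*} [Field F] (q : Polynomial F) (m : ℕ) (s : Fin m → ℕ) :
    AddCommGroup (Uspace F q m s) :=
  inferInstanceAs (AddCommGroup ((i : Fin m) → Polynomial F ⧸ Ideal.span {(pShift q i) ^ (s i)}))

noncomputable instance {F : Type*} [Field F] (q : Polynomial F) (m : ℕ) (s : Fin m → ℕ) :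
    Module F (Uspace F q m s) :=
  inferInstanceAs (Module F ((i : Fin m) → Polynomial F ⧸ Ideal.span {(pShift q i) ^ (s i)}))

/-- The operator `A ∈ End_F(U)`: multiplication by `X`. -/
noncomputable def Aop (F : Type*) [Field F] (q : Polynomial F) (m : ℕ) (s : Fin m → ℕ) :
    Module.End F (Uspace F q m s) :=
  LinearMap.pi fun i =>
    (LinearMap.mulLeft F (Ideal.Quotient.mk (Ideal.span {(pShift q i) ^ (s i)}) X)).comp
      (LinearMap.proj i)

/-- The operator `E ∈ End_F(U)`: the `F[X]`-linear map with `E u_i = (X + (i−1)) u_i`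
(0-based: on the `i`-th component it is multiplication by `X + i`). -/
noncomputable def Eop (F : Type*) [Field F] (q : Polynomial F) (m : ℕ) (s : Fin m → ℕ) :
    Module.End F (Uspace F q m s) :=
  LinearMap.pi fun i =>
    (LinearMap.mulLeft F
        (Ideal.Quotient.mk (Ideal.span {(pShift q i) ^ (s i)}) (X + C (i : F)))).comp
      (LinearMap.proj i)

/-- Componentwise multiplication by the polynomial `g` on `U` (the action `u ↦ g(X)·u`). -/
noncomputable def polySmul {F : Type*} [Field F] {q : Polynomial F} {m : ℕ} {s : Fin m → ℕ}
    (g : Polynomial F) (u : Uspace F q m s) : Uspace F q m s :=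
  fun i => Ideal.Quotient.mk (Ideal.span {(pShift q i) ^ (s i)}) g * u i

/-- The canonical generator `u_{i+1}` of the summand `U_{i+1}` (0-based). -/
noncomputable def uGen (F : Type*) [Field F] (q : Polynomial F) (m : ℕ) (s : Fin m → ℕ)
    (i : Fin m) : Uspace F q m s :=
  Pi.single i 1

/-- The standing assumptions on the data: `p₁ = q` is monic irreducible of degree `d`,
`m > 1`, and `s₁ ≥ s₂ ≥ ⋯ ≥ s_m ≥ 1`. -/
structure GoodData (F : Type*) [Field F] (q : Polynomial F) (d m : ℕ) (s : Fin m → ℕ) :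
    Prop where
  monic : q.Monic
  irr : Irreducible q
  deg : q.natDegree = d
  hm : 1 < m
  dec : ∀ i j : Fin m, i ≤ j → s j ≤ s i
  pos : ∀ i, 1 ≤ s i

/-- `T` is the operator of the paper: the unique `F`-linear endomorphism of `U` with
`T u₁ = 0`, `T u_i = p_{i−1}(X)^{s_{i−1}−s_i} u_{i−1}` for `2 ≤ i ≤ m`, and
`T(g(X+1)·u) = g(X)·(T u)` for all `g ∈ F[X]`, `u ∈ U`. -/
def IsTmap {F : Type*} [Field F] (q : Polynomial F) (m : ℕ) (s : Fin m → ℕ)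
    (T : Module.End F (Uspace F q m s)) : Prop :=
  (∀ h0 : 0 < m, T (uGen F q m s ⟨0, h0⟩) = 0) ∧
  (∀ (i : ℕ) (hi : i + 1 < m),
      T (uGen F q m s ⟨i + 1, hi⟩) =
        polySmul ((pShift q i) ^ (s ⟨i, by omega⟩ - s ⟨i + 1, hi⟩))
          (uGen F q m s ⟨i, by omega⟩)) ∧
  (∀ (g : Polynomial F) (u : Uspace F q m s),
      T (polySmul (g.comp (X + C 1)) u) = polySmul g (T u))

/-- The linear map `F[X] → End_F(U)`, `g ↦ T^j ∘ g(E)`, whose image is the subspace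
`T^j·𝓔` of `End_F(U)`. -/
noncomputable def psiMap {F : Type*} [Field F] (q : Polynomial F) (m : ℕ) (s : Fin m → ℕ)
    (T : Module.End F (Uspace F q m s)) (j : ℕ) :
    Polynomial F →ₗ[F] Module.End F (Uspace F q m s) :=
  (LinearMap.mulLeft F (T ^ j)).comp (Polynomial.aeval (Eop F q m s)).toLinearMap

/-! ### Auxiliary lemmas -/

section Aux

variable {F : Type*} [Field F] {q : Polynomial F} {m : ℕ} {s : Fin m → ℕ}

lemma Uspace.zero_apply (i : Fin m) : (0 : Uspace F q m s) i = 0 := rfl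

lemma Uspace.add_apply (u v : Uspace F q m s) (i : Fin m) : (u + v) i = u i + v i := rfl

lemma Uspace.smul_apply (c : F) (u : Uspace F q m s) (i : Fin m) : (c • u) i = c • u i := rfl

lemma Aop_apply (u : Uspace F q m s) (i : Fin m) :
    Aop F q m s u i = Ideal.Quotient.mk _ X * u i := rfl

lemma Eop_apply (u : Uspace F q m s) (i : Fin m) :
    Eop F q m s u i = Ideal.Quotient.mk _ (X + C (i : F)) * u i := rfl

lemma smul_mk (a : F) (i : Fin m) (b : Polynomial F) :
    a • (Ideal.Quotient.mk (Ideal.span {(pShift q i) ^ (s i)}) b)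
      = Ideal.Quotient.mk _ (C a * b) := by
  have := map_smul (Ideal.Quotient.mkₐ F (Ideal.span {(pShift q i) ^ (s i)})) a b
  rw [Polynomial.smul_eq_C_mul] at this
  exact this.symm

lemma polySmul_mul (a b : Polynomial F) (u : Uspace F q m s) :
    polySmul (a * b) u = polySmul a (polySmul b u) := by
  funext i
  show Ideal.Quotient.mk _ (a * b) * u i = Ideal.Quotient.mk _ a * (Ideal.Quotient.mk _ b * u i)
  rw [map_mul, mul_assoc]

lemma polySmul_one (u : Uspace F q m s) : polySmul 1 u = u := by
  funext i
  show Ideal.Quotient.mk _ (1 : Polynomial F) * u i = u i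
  rw [map_one, one_mul]

lemma polySmul_zero (a : Polynomial F) : polySmul a (0 : Uspace F q m s) = 0 := by
  funext i
  show Ideal.Quotient.mk _ a * (0 : Polynomial F ⧸ Ideal.span {(pShift q i) ^ (s i)}) = 0
  rw [mul_zero]

lemma polySmul_uGen (a : Polynomial F) (t : Fin m) :
    polySmul a (uGen F q m s t) = Pi.single t (Ideal.Quotient.mk _ a) := by
  funext i
  simp only [polySmul, uGen]
  by_cases h : i = t
  · subst h
    rw [Pi.single_eq_same, Pi.single_eq_same, mul_one]
  · rw [Pi.single_eq_of_ne h, Pi.single_eq_of_ne h, mul_zero]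

lemma polySmul_uGen_same (a : Polynomial F) (t : Fin m) :
    polySmul a (uGen F q m s t) t = Ideal.Quotient.mk _ a := by
  rw [polySmul_uGen]; exact Pi.single_eq_same _ _

lemma polySmul_uGen_ne (a : Polynomial F) {t i : Fin m} (h : i ≠ t) :
    polySmul a (uGen F q m s t) i = 0 := by
  rw [polySmul_uGen]; exact Pi.single_eq_of_ne h _

lemma aeval_Eop_apply (g : Polynomial F) :
    ∀ (u : Uspace F q m s) (i : Fin m),
      (Polynomial.aeval (Eop F q m s) g) u i
        = Ideal.Quotient.mk _ (g.comp (X + C (i : F))) * u i := by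
  induction g using Polynomial.induction_on with
  | C a =>
    intro u i
    rw [aeval_C, Module.algebraMap_end_apply, Uspace.smul_apply, C_comp]
    obtain ⟨b, hb⟩ := Ideal.Quotient.mk_surjective (u i)
    rw [← hb, smul_mk, ← map_mul]
  | add p r hp hr =>
    intro u i
    rw [map_add, LinearMap.add_apply, Uspace.add_apply, hp, hr, add_comp, map_add, add_mul]
  | monomial n a ih =>
    intro u i
    have h1 : C a * X ^ (n + 1) = (C a * X ^ n) * X := by ring
    rw [h1, map_mul, aeval_X, Module.End.mul_apply, ih, Eop_apply]
    conv_rhs => rw [mul_comp (C a * X ^ n) X, X_comp, map_mul]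
    rw [mul_assoc]

lemma aeval_Eop_polySmul_uGen (g h : Polynomial F) (l : Fin m) :
    (Polynomial.aeval (Eop F q m s) g) (polySmul h (uGen F q m s l))
      = polySmul (g.comp (X + C (l : F)) * h) (uGen F q m s l) := by
  funext i
  rw [aeval_Eop_apply]
  by_cases hi : i = l
  · subst hi
    rw [polySmul_uGen_same, polySmul_uGen_same, map_mul]
  · rw [polySmul_uGen_ne _ hi, polySmul_uGen_ne _ hi, mul_zero]

end Aux

section Tlem

variable {F : Type*} [Field F] {q : Polynomial F} {m : ℕ} {s : Fin m → ℕ}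
variable {T : Module.End F (Uspace F q m s)}

lemma T_polySmul (hT : IsTmap q m s T) (h : Polynomial F) (u : Uspace F q m s) :
    T (polySmul h u) = polySmul (h.comp (X - C 1)) (T u) := by
  have key := hT.2.2 (h.comp (X - C 1)) u
  have h2 : ((X : Polynomial F) - C 1).comp (X + C 1) = X := by
    simp [sub_comp]
  rwa [Polynomial.comp_assoc, h2, comp_X] at key

lemma Tpow_polySmul_uGen_zero (hT : IsTmap q m s T) :
    ∀ (j : ℕ) (l : Fin m) (h : Polynomial F), (l : ℕ) < j →
      (T ^ j) (polySmul h (uGen F q m s l)) = 0 := by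
  intro j
  induction j with
  | zero => intro l h hl; omega
  | succ j ihj =>
    intro l h hl
    rw [pow_succ, Module.End.mul_apply]
    obtain ⟨lv, hlv⟩ := l
    cases lv with
    | zero =>
      rw [T_polySmul hT, hT.1 hlv, polySmul_zero, map_zero]
    | succ i =>
      rw [T_polySmul hT, hT.2.1 i hlv, ← polySmul_mul]
      exact ihj ⟨i, by omega⟩ _ (by simp only [Fin.val_mk] at hl ⊢; omega)

lemma Tpow_polySmul_uGen (hT : IsTmap q m s T) :
    ∀ (j : ℕ) (l : Fin m) (hj : j ≤ (l : ℕ)),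
      ∃ w : Polynomial F, ∀ h : Polynomial F,
        (T ^ j) (polySmul h (uGen F q m s l))
          = polySmul (h.comp (X - C (j : F)) * w)
              (uGen F q m s ⟨(l : ℕ) - j, by omega⟩) := by
  intro j
  induction j with
  | zero =>
    intro l hj
    refine ⟨1, fun h => ?_⟩
    have hl : (⟨(l : ℕ) - 0, by omega⟩ : Fin m) = l := Fin.ext (Nat.sub_zero _)
    rw [pow_zero, Module.End.one_apply, hl]
    norm_num
  | succ j ihj =>
    intro l hj
    obtain ⟨lv, hlv⟩ := l
    cases lv with
    | zero => simp only [Fin.val_mk] at hj; omega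
    | succ i =>
      simp only [Fin.val_mk] at hj ⊢
      obtain ⟨w, hw⟩ := ihj ⟨i, by omega⟩ (by simp only [Fin.val_mk]; omega)
      refine ⟨(pShift q i ^ (s ⟨i, by omega⟩ - s ⟨i + 1, hlv⟩)).comp (X - C (j : F)) * w,
        fun h => ?_⟩
      rw [pow_succ, Module.End.mul_apply, T_polySmul hT, hT.2.1 i hlv, ← polySmul_mul, hw]
      have hcomp : ∀ p : Polynomial F,
          (p.comp (X - C 1)).comp (X - C (j : F)) = p.comp (X - C ((j + 1 : ℕ) : F)) := by
        intro p
        rw [Polynomial.comp_assoc]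
        congr 1
        push_cast
        simp only [sub_comp, X_comp, C_comp, map_add, map_one, C_1, one_comp]
        ring
      have hpoly : (h.comp (X - C 1) * pShift q i ^ (s ⟨i, by omega⟩ - s ⟨i + 1, hlv⟩)).comp
            (X - C (j : F)) * w
          = h.comp (X - C ((j + 1 : ℕ) : F)) *
              ((pShift q i ^ (s ⟨i, by omega⟩ - s ⟨i + 1, hlv⟩)).comp (X - C (j : F)) * w) := by
        rw [mul_comp, hcomp, mul_assoc]
      have hfin : (⟨i - j, by omega⟩ : Fin m) = ⟨i + 1 - (j + 1), by omega⟩ :=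
        Fin.ext (by simp only [Fin.val_mk]; omega)
      rw [hpoly, hfin]

lemma psiMap_apply' (j : ℕ) (g : Polynomial F) :
    psiMap q m s T j g = (T ^ j) * Polynomial.aeval (Eop F q m s) g := rfl

end Tlem

section Key

variable {F : Type*} [Field F] {q : Polynomial F} {m : ℕ} {s : Fin m → ℕ}

lemma Uspace.sum_apply {ι : Type*} [DecidableEq ι] (t : Finset ι) (f : ι → Uspace F q m s)
    (i : Fin m) : (∑ j ∈ t, f j) i = ∑ j ∈ t, f j i := by
  induction t using Finset.induction_on with
  | empty => rfl
  | insert _ _ h ih => rw [Finset.sum_insert h, Finset.sum_insert h, Uspace.add_apply, ih]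

lemma uGen_same (l : Fin m) : uGen F q m s l l = 1 := Pi.single_eq_same _ _

lemma key_lemma {d : ℕ} (hdata : GoodData F q d m s)
    {T : Module.End F (Uspace F q m s)} (hT : IsTmap q m s T)
    (c : F) (g : Fin m → Polynomial F)
    (hsum : c • Aop F q m s
        + ∑ j : Fin m, (T ^ (j : ℕ)) * Polynomial.aeval (Eop F q m s) (g j) = 0) :
    c = 0 ∧ ∀ j : Fin m, (T ^ (j : ℕ)) * Polynomial.aeval (Eop F q m s) (g j) = 0 := by
  have hm0 : 0 < m := by have := hdata.hm; omega
  -- Step 1: divisibility from the top component.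
  have hdvd : ∀ l : Fin m,
      pShift q (l : ℕ) ^ s l ∣ (C c * X + (g ⟨0, hm0⟩).comp (X + C (l : F))) := by
    intro l
    have e := LinearMap.congr_fun hsum (uGen F q m s l)
    rw [LinearMap.add_apply, LinearMap.smul_apply, LinearMap.sum_apply,
      LinearMap.zero_apply] at e
    have e2 := congrFun e l
    rw [Uspace.add_apply, Uspace.smul_apply, Uspace.sum_apply, Uspace.zero_apply] at e2
    have htermne : ∀ j : Fin m, j ∈ Finset.univ → j ≠ ⟨0, hm0⟩ →
        ((T ^ (j : ℕ)) * Polynomial.aeval (Eop F q m s) (g j)) (uGen F q m s l) l = 0 := by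
      intro j _ hj
      rw [Module.End.mul_apply, ← polySmul_one (uGen F q m s l), aeval_Eop_polySmul_uGen,
        mul_one]
      have hj0 : (j : ℕ) ≠ 0 := fun h => hj (Fin.ext h)
      by_cases hle : (j : ℕ) ≤ (l : ℕ)
      · obtain ⟨w, hw⟩ := Tpow_polySmul_uGen hT j l hle
        rw [hw]
        refine polySmul_uGen_ne _ ?_
        apply Fin.ne_of_val_ne
        simp only [Fin.val_mk]
        omega
      · rw [Tpow_polySmul_uGen_zero hT _ l _ (by omega), Uspace.zero_apply]
    rw [Finset.sum_eq_single_of_mem (⟨0, hm0⟩ : Fin m) (Finset.mem_univ _) htermne] at e2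
    rw [Module.End.mul_apply] at e2
    have hv0 : ((⟨0, hm0⟩ : Fin m) : ℕ) = 0 := rfl
    rw [hv0, pow_zero, Module.End.one_apply] at e2
    rw [← polySmul_one (uGen F q m s l), aeval_Eop_polySmul_uGen, mul_one, Aop_apply] at e2
    rw [polySmul_uGen_same 1 l, map_one, mul_one] at e2
    rw [polySmul_uGen_same _ l, smul_mk, ← map_add, Ideal.Quotient.eq_zero_iff_mem,
      Ideal.mem_span_singleton] at e2
    exact e2
  -- Step 2: c = 0.
  have hc : c = 0 := by
    have d1 := hdvd ⟨0, hm0⟩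
    have d2 := hdvd ⟨1, hdata.hm⟩
    simp only [Fin.val_mk, Nat.cast_zero, Nat.cast_one, pShift, C_0, add_zero, comp_X] at d1 d2
    have hXc : ((X : Polynomial F) + C 1).comp (X - C 1) = X := by
      simp [add_comp]
    have d2' : q ^ s ⟨1, hdata.hm⟩ ∣ C c * (X - C 1) + g ⟨0, hm0⟩ := by
      obtain ⟨k, hk⟩ := d2
      refine ⟨k.comp (X - C 1), ?_⟩
      have h3 := congrArg (fun p : Polynomial F => p.comp (X - C 1)) hk
      simpa [add_comp, mul_comp, pow_comp, Polynomial.comp_assoc, hXc] using h3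
    have d1' : q ^ s ⟨1, hdata.hm⟩ ∣ C c * X + g ⟨0, hm0⟩ :=
      dvd_trans (pow_dvd_pow q (hdata.dec ⟨0, hm0⟩ ⟨1, hdata.hm⟩ (by simp))) d1
    have dC : q ^ s ⟨1, hdata.hm⟩ ∣ C c := by
      have hsub := dvd_sub d1' d2'
      have hid : (C c * X + g ⟨0, hm0⟩) - (C c * (X - C 1) + g ⟨0, hm0⟩) = C c := by
        rw [C_1]; ring
      rwa [hid] at hsub
    by_contra hc0
    have hu : IsUnit (C c) := Polynomial.isUnit_C.mpr (Ne.isUnit hc0)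
    have hq1 : IsUnit (q ^ s ⟨1, hdata.hm⟩) := isUnit_of_dvd_unit dC hu
    have hq : IsUnit q :=
      isUnit_of_dvd_unit (dvd_pow_self q (by have := hdata.pos ⟨1, hdata.hm⟩; omega)) hq1
    exact hdata.irr.not_isUnit hq
  subst hc
  rw [zero_smul, zero_add] at hsum
  refine ⟨rfl, ?_⟩
  intro j₀
  apply LinearMap.ext; intro u
  rw [LinearMap.zero_apply]
  have hu : u = ∑ l : Fin m, Pi.single l (u l) := (Finset.univ_sum_single u).symm
  rw [hu]
  refine (map_sum _ _ _).trans ?_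
  refine Finset.sum_eq_zero ?_
  intro l _
  obtain ⟨h, hh⟩ := Ideal.Quotient.mk_surjective (u l)
  rw [← hh, ← polySmul_uGen, Module.End.mul_apply, aeval_Eop_polySmul_uGen]
  by_cases hle : (j₀ : ℕ) ≤ (l : ℕ)
  · obtain ⟨w, hw⟩ := Tpow_polySmul_uGen hT (j₀ : ℕ) l hle
    -- vanishing of the coefficient at the target component
    have hvan : Ideal.Quotient.mk
        (Ideal.span {pShift q (((⟨(l : ℕ) - (j₀ : ℕ), by omega⟩ : Fin m)) : ℕ)
          ^ s ⟨(l : ℕ) - (j₀ : ℕ), by omega⟩})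
        (((g j₀).comp (X + C (l : F))).comp (X - C ((j₀ : ℕ) : F)) * w) = 0 := by
      have e := LinearMap.congr_fun hsum (uGen F q m s l)
      rw [LinearMap.sum_apply, LinearMap.zero_apply] at e
      have e2 := congrFun e (⟨(l : ℕ) - (j₀ : ℕ), by omega⟩ : Fin m)
      rw [Uspace.sum_apply, Uspace.zero_apply] at e2
      have htermne : ∀ j : Fin m, j ∈ Finset.univ → j ≠ j₀ →
          ((T ^ (j : ℕ)) * Polynomial.aeval (Eop F q m s) (g j)) (uGen F q m s l)
            (⟨(l : ℕ) - (j₀ : ℕ), by omega⟩ : Fin m) = 0 := by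
        intro j _ hj
        rw [Module.End.mul_apply, ← polySmul_one (uGen F q m s l), aeval_Eop_polySmul_uGen,
          mul_one]
        have hjv : (j : ℕ) ≠ (j₀ : ℕ) := fun hh' => hj (Fin.ext hh')
        by_cases hle' : (j : ℕ) ≤ (l : ℕ)
        · obtain ⟨w', hw'⟩ := Tpow_polySmul_uGen hT (j : ℕ) l hle'
          rw [hw']
          refine polySmul_uGen_ne _ ?_
          apply Fin.ne_of_val_ne
          simp only [Fin.val_mk]
          omega
        · rw [Tpow_polySmul_uGen_zero hT _ l _ (by omega), Uspace.zero_apply]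
      rw [Finset.sum_eq_single_of_mem j₀ (Finset.mem_univ _) htermne, Module.End.mul_apply,
        ← polySmul_one (uGen F q m s l), aeval_Eop_polySmul_uGen, mul_one, hw,
        polySmul_uGen_same] at e2
      exact e2
    rw [hw ((g j₀).comp (X + C (l : F)) * h)]
    have hsplit : ((g j₀).comp (X + C (l : F)) * h).comp (X - C ((j₀ : ℕ) : F)) * w
        = (h.comp (X - C ((j₀ : ℕ) : F)))
            * (((g j₀).comp (X + C (l : F))).comp (X - C ((j₀ : ℕ) : F)) * w) := by
      rw [mul_comp]; ring
    rw [hsplit, polySmul_mul, polySmul_uGen, hvan, Pi.single_zero]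
    exact polySmul_zero _
  · rw [Tpow_polySmul_uGen_zero hT _ l _ (by omega)]

end Key

/-- The subspaces `⟨A⟩` (the span of `A`), `𝓔 = T⁰𝓔`, `T𝓔`, `T²𝓔`, …,
`T^{m−1}𝓔` of `End_F(U)` are in direct sum (i.e. they form an independent family of
submodules). -/
theorem independent_A_and_TjE
    {F : Type*} [Field F] (q : Polynomial F) (d m : ℕ) (s : Fin m → ℕ)
    (hdata : GoodData F q d m s)
    (T : Module.End F (Uspace F q m s)) (hT : IsTmap q m s T) :
    iSupIndep (fun k : Fin (m + 1) =>
      (Fin.cases (F ∙ Aop F q m s)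
        (fun j : Fin m => LinearMap.range (psiMap q m s T j)) k :
          Submodule F (Module.End F (Uspace F q m s)))) := by
  rw [iSupIndep_def]
  intro k
  rw [Submodule.disjoint_def]
  intro x hxk hxrest
  rw [Submodule.mem_iSup_iff_exists_finsupp] at hxrest
  obtain ⟨f, hf, hfs⟩ := hxrest
  have hfk : f k = 0 := by
    have hk := hf k
    rwa [iSup_neg (by simp), Submodule.mem_bot] at hk
  have hfmem : ∀ j, j ≠ k → f j ∈
      (Fin.cases (F ∙ Aop F q m s)
        (fun j : Fin m => LinearMap.range (psiMap q m s T j)) j :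
          Submodule F (Module.End F (Uspace F q m s))) := by
    intro j hj
    have hjj := hf j
    rwa [iSup_pos hj] at hjj
  have hxsum : ∑ j : Fin (m + 1), f j = x := by
    rw [← hfs, Finsupp.sum_fintype]
    exact fun i => rfl
  set y : Fin (m + 1) → Module.End F (Uspace F q m s) := Function.update (⇑f) k (-x) with hy
  have hymem : ∀ j, y j ∈
      (Fin.cases (F ∙ Aop F q m s)
        (fun j : Fin m => LinearMap.range (psiMap q m s T j)) j :
          Submodule F (Module.End F (Uspace F q m s))) := by
    intro j
    by_cases hj : j = k
    · subst hj
      rw [hy, Function.update_self]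
      exact neg_mem hxk
    · rw [hy, Function.update_of_ne hj]
      exact hfmem j hj
  have hysum : ∑ j : Fin (m + 1), y j = 0 := by
    rw [hy, Finset.sum_update_of_mem (Finset.mem_univ k)]
    have hrest : ∑ j ∈ Finset.univ \ {k}, f j = ∑ j : Fin (m + 1), f j := by
      apply Finset.sum_subset (Finset.subset_univ _)
      intro z _ hz
      have hzk : z = k := by simpa using hz
      rw [hzk, hfk]
    rw [hrest, hxsum]
    exact neg_add_cancel x
  have h0 : ∃ c : F, y 0 = c • Aop F q m s := by
    have hmem0 := hymem 0
    simp only [Fin.cases_zero] at hmem0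
    obtain ⟨c, hc⟩ := Submodule.mem_span_singleton.mp hmem0
    exact ⟨c, hc.symm⟩
  obtain ⟨c, hc⟩ := h0
  have hgs : ∀ j : Fin m,
      ∃ g : Polynomial F, (T ^ (j : ℕ)) * Polynomial.aeval (Eop F q m s) g = y j.succ := by
    intro j
    have hmemj := hymem j.succ
    simp only [Fin.cases_succ] at hmemj
    obtain ⟨g, hg⟩ := LinearMap.mem_range.mp hmemj
    exact ⟨g, hg⟩
  choose g hg using hgs
  have hsum : c • Aop F q m s
      + ∑ j : Fin m, (T ^ (j : ℕ)) * Polynomial.aeval (Eop F q m s) (g j) = 0 := by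
    calc c • Aop F q m s + ∑ j : Fin m, (T ^ (j : ℕ)) * Polynomial.aeval (Eop F q m s) (g j)
        = y 0 + ∑ j : Fin m, y j.succ := by
          rw [← hc]
          congr 1
          exact Finset.sum_congr rfl fun j _ => hg j
      _ = ∑ j : Fin (m + 1), y j := (Fin.sum_univ_succ y).symm
      _ = 0 := hysum
  obtain ⟨hc0, hterms⟩ := key_lemma hdata hT c g hsum
  have hyzero : ∀ j, y j = 0 := by
    intro j
    induction j using Fin.cases with
    | zero => rw [hc, hc0, zero_smul]
    | succ i => rw [← hg i, hterms i]
  have hyk : y k = -x := by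
    rw [hy]
    exact Function.update_self k (-x) ⇑f
  exact neg_eq_zero.mp (hyk.symm.trans (hyzero k))
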